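/- Every geodesic in the Grassmann graph Γ_k(H) joining two orthogonal k-dimensional subspaces consists of mutually compatible elements. -/

import Mathlib

/-- The Grassmann graph on the `k`-dimensional subspaces of `H`: two distinct
`k`-dimensional subspaces are adjacent iff their intersection has dimension `k-1`. -/
def GrassmannGraph (H : Type*) [NormedAddCommGroup H] [InnerProductSpace ℂ H] (k : ℕ) :
    SimpleGraph {X : Submodule ℂ H // Module.finrank ℂ ↥X = k} where
  Adj X Y := Module.finrank ℂ ↥(X.1 ⊓ Y.1) = k - 1 ∧ X ≠ Y
  symm := by
    constructor
    intro X Y h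
    refine ⟨?_, h.2.symm⟩
    rw [inf_comm]
    exact h.1
  loopless := ⟨fun X h => h.2 rfl⟩

def Compatible {H : Type*} [NormedAddCommGroup H] [InnerProductSpace ℂ H]
    (X Y : Submodule ℂ H) : Prop :=
  ∃ X' Y' Z : Submodule ℂ H, X' ⟂ Y' ∧ X' ⟂ Z ∧ Y' ⟂ Z ∧ X = X' ⊔ Z ∧ Y = Y' ⊔ Z

section Aux

open Module Submodule

variable {H : Type*} [NormedAddCommGroup H] [InnerProductSpace ℂ H]

lemma myCompat_aux {X Y A A' B B' : Submodule ℂ H} (hXY : X ⟂ Y)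
    (hAA : A' ≤ A) (hAX : A ≤ X) (hBB : B ≤ B') (hBY : B' ≤ Y)
    [FiniteDimensional ℂ A'] [FiniteDimensional ℂ B] :
    Compatible (A ⊔ B) (A' ⊔ B') := by
  refine ⟨A'ᗮ ⊓ A, Bᗮ ⊓ B', A' ⊔ B, ?_, ?_, ?_, ?_, ?_⟩
  · exact hXY.mono (inf_le_right.trans hAX) (inf_le_right.trans hBY)
  · rw [Submodule.isOrtho_sup_right]
    constructor
    · exact (Submodule.isOrtho_orthogonal_left A').mono_left inf_le_left
    · exact hXY.mono (inf_le_right.trans hAX) (hBB.trans hBY)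
  · rw [Submodule.isOrtho_sup_right]
    constructor
    · exact hXY.symm.mono (inf_le_right.trans hBY) (hAA.trans hAX)
    · exact (Submodule.isOrtho_orthogonal_left B).mono_left inf_le_left
  · rw [← sup_assoc, sup_comm (A'ᗮ ⊓ A) A', Submodule.sup_orthogonal_inf_of_hasOrthogonalProjection hAA]
  · rw [sup_comm A' B, ← sup_assoc, sup_comm (Bᗮ ⊓ B') B,
      Submodule.sup_orthogonal_inf_of_hasOrthogonalProjection hBB, sup_comm]

lemma myCompat_symm {X Y : Submodule ℂ H} (h : Compatible X Y) : Compatible Y X := by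
  obtain ⟨X', Y', Z, h1, h2, h3, h4, h5⟩ := h
  exact ⟨Y', X', Z, h1.symm, h3, h2, h5, h4⟩

lemma myStep {k : ℕ} {V W S : Submodule ℂ H} [FiniteDimensional ℂ V] [FiniteDimensional ℂ W]
    (hV : finrank ℂ V = k) (hVW : finrank ℂ ↥(V ⊓ W) = k - 1) (hk : 1 ≤ k) :
    finrank ℂ ↥(V ⊓ S) ≤ finrank ℂ ↥(W ⊓ S) + 1 := by
  haveI : FiniteDimensional ℂ ↥(V ⊓ S) := Submodule.finiteDimensional_of_le inf_le_left
  haveI : FiniteDimensional ℂ ↥(V ⊓ W) := Submodule.finiteDimensional_of_le inf_le_left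
  have h1 := Submodule.finrank_sup_add_finrank_inf_eq (V ⊓ S) (V ⊓ W)
  have h2 : finrank ℂ ↥((V ⊓ S) ⊔ (V ⊓ W)) ≤ k := by
    rw [← hV]; exact Submodule.finrank_mono (sup_le inf_le_left inf_le_left)
  have h3 : finrank ℂ ↥((V ⊓ S) ⊓ (V ⊓ W)) ≤ finrank ℂ ↥(W ⊓ S) := by
    haveI : FiniteDimensional ℂ ↥(W ⊓ S) := Submodule.finiteDimensional_of_le inf_le_left
    refine Submodule.finrank_mono (le_inf ?_ ?_)
    · exact inf_le_right.trans inf_le_right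
    · exact inf_le_left.trans inf_le_right
  omega

lemma myNest {k : ℕ} {V W S : Submodule ℂ H} [FiniteDimensional ℂ V] [FiniteDimensional ℂ W]
    (hV : finrank ℂ V = k) (hVW : finrank ℂ ↥(V ⊓ W) = k - 1) (hk : 1 ≤ k)
    (hd : finrank ℂ ↥(V ⊓ S) = finrank ℂ ↥(W ⊓ S) + 1) : W ⊓ S ≤ V ⊓ S := by
  haveI : FiniteDimensional ℂ ↥(V ⊓ S) := Submodule.finiteDimensional_of_le inf_le_left
  haveI : FiniteDimensional ℂ ↥(V ⊓ W) := Submodule.finiteDimensional_of_le inf_le_left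
  haveI : FiniteDimensional ℂ ↥(W ⊓ S) := Submodule.finiteDimensional_of_le inf_le_left
  have hCle : (V ⊓ S) ⊓ (V ⊓ W) ≤ W ⊓ S :=
    le_inf (inf_le_right.trans inf_le_right) (inf_le_left.trans inf_le_right)
  have h1 := Submodule.finrank_sup_add_finrank_inf_eq (V ⊓ S) (V ⊓ W)
  have h2 : finrank ℂ ↥((V ⊓ S) ⊔ (V ⊓ W)) ≤ k := by
    rw [← hV]; exact Submodule.finrank_mono (sup_le inf_le_left inf_le_left)
  have h3 : finrank ℂ ↥(W ⊓ S) ≤ finrank ℂ ↥((V ⊓ S) ⊓ (V ⊓ W)) := by omega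
  have heq := Submodule.eq_of_le_of_finrank_le hCle h3
  rw [← heq]
  exact inf_le_left

end Aux

theorem stmt_13 {H : Type*} [NormedAddCommGroup H] [InnerProductSpace ℂ H] {k : ℕ}
    (hdim : 2 * k ≤ Module.rank ℂ H)
    (X Y : {X : Submodule ℂ H // Module.finrank ℂ ↥X = k})
    (hXY : X.1 ⟂ Y.1)
    (p : (GrassmannGraph H k).Walk X Y) (hp : p.length = k) :
    ∀ i ≤ k, ∀ j ≤ k, Compatible (p.getVert i).1 (p.getVert j).1 := by
  rcases Nat.eq_zero_or_pos k with hk | hk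
  · subst hk
    intro i hi j hj
    interval_cases i
    interval_cases j
    exact ⟨⊥, ⊥, (p.getVert 0).1, Submodule.isOrtho_bot_left, Submodule.isOrtho_bot_left,
      Submodule.isOrtho_bot_left, (bot_sup_eq _).symm, (bot_sup_eq _).symm⟩
  -- main case : 1 ≤ k
  set V : ℕ → Submodule ℂ H := fun i => (p.getVert i).1 with hVdef
  have hVfr : ∀ i, Module.finrank ℂ (V i) = k := fun i => (p.getVert i).2
  haveI hfd : ∀ i, FiniteDimensional ℂ (V i) := fun i =>
    FiniteDimensional.of_finrank_pos (by rw [hVfr]; exact hk)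
  have hadj : ∀ i < k, Module.finrank ℂ ↥(V i ⊓ V (i + 1)) = k - 1 := by
    intro i hi
    exact And.left (p.adj_getVert_succ (i := i) (by omega))
  have hadj' : ∀ i < k, Module.finrank ℂ ↥(V (i + 1) ⊓ V i) = k - 1 := by
    intro i hi
    rw [inf_comm]; exact hadj i hi
  have hV0 : V 0 = X.1 := by simp [hVdef]
  have hVk : V k = Y.1 := by
    have := p.getVert_length
    rw [hp] at this
    simp [hVdef, this]
  have hXYbot : X.1 ⊓ Y.1 = ⊥ := disjoint_iff.mp hXY.disjoint
  -- the step inequality specialized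
  have step : ∀ S : Submodule ℂ H, ∀ i < k,
      Module.finrank ℂ ↥(V i ⊓ S) ≤ Module.finrank ℂ ↥(V (i + 1) ⊓ S) + 1 := by
    intro S i hi
    exact myStep (hVfr i) (hadj i hi) hk
  have step' : ∀ S : Submodule ℂ H, ∀ i < k,
      Module.finrank ℂ ↥(V (i + 1) ⊓ S) ≤ Module.finrank ℂ ↥(V i ⊓ S) + 1 := by
    intro S i hi
    exact myStep (hVfr (i + 1)) (hadj' i hi) hk
  -- dimension of intersections with X
  have dXlo : ∀ i ≤ k, k - i ≤ Module.finrank ℂ ↥(V i ⊓ X.1) := by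
    intro i
    induction i with
    | zero =>
      intro _
      have : V 0 ⊓ X.1 = X.1 := by rw [hV0, inf_idem]
      rw [this, X.2]
      omega
    | succ n ih =>
      intro hn
      have h1 := ih (by omega)
      have h2 := step X.1 n (by omega)
      omega
  have dXhi : ∀ m, ∀ i, i + m = k → Module.finrank ℂ ↥(V i ⊓ X.1) ≤ m := by
    intro m
    induction m with
    | zero =>
      intro i hi
      have hik : V i = Y.1 := by rw [show i = k by omega]; exact hVk
      have : V i ⊓ X.1 = ⊥ := by rw [hik, inf_comm, hXYbot]
      rw [this, finrank_bot]
    | succ n ih =>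
      intro i hi
      have h1 := ih (i + 1) (by omega)
      have h2 := step X.1 i (by omega)
      omega
  have dX : ∀ i ≤ k, Module.finrank ℂ ↥(V i ⊓ X.1) = k - i := by
    intro i hi
    have := dXlo i hi
    have := dXhi (k - i) i (by omega)
    omega
  -- dimension of intersections with Y
  have dYlo : ∀ m, ∀ i, i + m = k → i ≤ Module.finrank ℂ ↥(V i ⊓ Y.1) := by
    intro m
    induction m with
    | zero =>
      intro i hi
      have hik : V i = Y.1 := by rw [show i = k by omega]; exact hVk
      have : V i ⊓ Y.1 = Y.1 := by rw [hik, inf_idem]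
      rw [this, Y.2]
      omega
    | succ n ih =>
      intro i hi
      have h1 := ih (i + 1) (by omega)
      have h2 := step' Y.1 i (by omega)
      omega
  have dYhi : ∀ i ≤ k, Module.finrank ℂ ↥(V i ⊓ Y.1) ≤ i := by
    intro i
    induction i with
    | zero =>
      intro _
      have : V 0 ⊓ Y.1 = ⊥ := by rw [hV0, hXYbot]
      rw [this, finrank_bot]
    | succ n ih =>
      intro hn
      have h1 := ih (by omega)
      have h2 := step' Y.1 n (by omega)
      omega
  have dY : ∀ i ≤ k, Module.finrank ℂ ↥(V i ⊓ Y.1) = i := by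
    intro i hi
    have := dYlo (k - i) i (by omega)
    have := dYhi i hi
    omega
  -- nestedness
  have nestX : ∀ i j, i ≤ j → j ≤ k → V j ⊓ X.1 ≤ V i ⊓ X.1 := by
    intro i j hij hjk
    induction j with
    | zero =>
      have : i = 0 := by omega
      subst this; exact le_refl _
    | succ n ih =>
      rcases Nat.eq_or_lt_of_le hij with h | h
      · subst h; exact le_refl _
      · have hstep : V (n + 1) ⊓ X.1 ≤ V n ⊓ X.1 := by
          refine myNest (hVfr n) (hadj n (by omega)) hk ?_
          rw [dX n (by omega), dX (n + 1) (by omega)]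
          omega
        exact hstep.trans (ih (by omega) (by omega))
  have nestY : ∀ i j, i ≤ j → j ≤ k → V i ⊓ Y.1 ≤ V j ⊓ Y.1 := by
    intro i j hij hjk
    induction j with
    | zero =>
      have : i = 0 := by omega
      subst this; exact le_refl _
    | succ n ih =>
      rcases Nat.eq_or_lt_of_le hij with h | h
      · subst h; exact le_refl _
      · have hstep : V n ⊓ Y.1 ≤ V (n + 1) ⊓ Y.1 := by
          refine myNest (hVfr (n + 1)) (hadj' n (by omega)) hk ?_
          rw [dY n (by omega), dY (n + 1) (by omega)]
        exact (ih (by omega) (by omega)).trans hstep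
  -- decomposition V i = (V i ⊓ X) ⊔ (V i ⊓ Y)
  have decomp : ∀ i ≤ k, (V i ⊓ X.1) ⊔ (V i ⊓ Y.1) = V i := by
    intro i hi
    haveI : FiniteDimensional ℂ ↥(V i ⊓ X.1) := Submodule.finiteDimensional_of_le inf_le_left
    haveI : FiniteDimensional ℂ ↥(V i ⊓ Y.1) := Submodule.finiteDimensional_of_le inf_le_left
    have hinf : (V i ⊓ X.1) ⊓ (V i ⊓ Y.1) = ⊥ := by
      rw [← le_bot_iff, ← hXYbot]
      exact le_inf (inf_le_left.trans inf_le_right) (inf_le_right.trans inf_le_right)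
    have h1 := Submodule.finrank_sup_add_finrank_inf_eq (V i ⊓ X.1) (V i ⊓ Y.1)
    rw [hinf, finrank_bot, dX i hi, dY i hi] at h1
    refine Submodule.eq_of_le_of_finrank_le (sup_le inf_le_left inf_le_left) ?_
    rw [hVfr i]
    omega
  have main : ∀ i j, i ≤ j → j ≤ k → Compatible (V i) (V j) := by
    intro i j hij hjk
    haveI := hfd i
    haveI := hfd j
    haveI : FiniteDimensional ℂ ↥(V j ⊓ X.1) := Submodule.finiteDimensional_of_le inf_le_left
    haveI : FiniteDimensional ℂ ↥(V i ⊓ Y.1) := Submodule.finiteDimensional_of_le inf_le_left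
    rw [← decomp i (hij.trans hjk), ← decomp j hjk]
    exact myCompat_aux hXY (nestX i j hij hjk) inf_le_right (nestY i j hij hjk) inf_le_right
  intro i hi j hj
  rcases le_total i j with h | h
  · exact main i j h hj
  · exact myCompat_symm (main j i h hi)
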